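/- Under the hypotheses of the existence theorem, the operator T is coercive: there exist constants C > 0 (depending only on Ω, k) such that ⟨Tu, u⟩ ≥ k C ‖u‖²_{H^1(Ω)} − k²|Ω|/4 for all u ∈ H^1(Ω); in particular ⟨Tu, u⟩/‖u‖_{H^1(Ω)} → +∞ as ‖u‖_{H^1(Ω)} → +∞. -/

import Mathlib

open MeasureTheory Real Classical
open scoped InnerProductSpace

noncomputable section

/-- Euclidean space `ℝ^N`. -/
abbrev E (N : ℕ) := EuclideanSpace ℝ (Fin N)

/-- Membership in the Sobolev space `H¹(Ω)`: `u` and its gradient are in `L²(Ω)`. -/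
def MemH1 {N : ℕ} (Ω : Set (E N)) (u : E N → ℝ) : Prop :=
  MemLp u 2 (volume.restrict Ω) ∧ MemLp (gradient u) 2 (volume.restrict Ω)

/-- The `H¹(Ω)` norm. -/
def H1norm {N : ℕ} (Ω : Set (E N)) (u : E N → ℝ) : ℝ :=
  Real.sqrt ((∫ x in Ω, (u x) ^ 2) + ∫ x in Ω, ‖gradient u x‖ ^ 2)

/-- The `L²(Ω)` norm. -/
def L2norm {N : ℕ} (Ω : Set (E N)) (u : E N → ℝ) : ℝ :=
  Real.sqrt (∫ x in Ω, (u x) ^ 2)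

/-- The pairing `⟨Tu, φ⟩ = ∫_Ω k_ε ∇u·∇φ + ∫_{Ω∖ω} u³ φ`, where `k_ε = k` on `ω`
and `k_ε = 1` on `Ω∖ω`. -/
def Tpair {N : ℕ} (Ω ω : Set (E N)) (k : ℝ) (u φ : E N → ℝ) : ℝ :=
  (∫ x in Ω, (if x ∈ ω then k else 1) * ⟪gradient u x, gradient φ x⟫_ℝ)
    + ∫ x in Ω \ ω, (u x) ^ 3 * φ x

/-- Coercivity of the operator `T`: assuming the Poincaré-type inequality
`Cp ‖u‖²_{H¹} ≤ ‖∇u‖²_{L²(Ω)} + ‖u‖²_{L²(Ω∖ω)}`, there is `C > 0` such that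
`⟨Tu, u⟩ ≥ k C ‖u‖²_{H¹(Ω)} − k²|Ω|/4`; in particular
`⟨Tu, u⟩ / ‖u‖_{H¹} → +∞` as `‖u‖_{H¹} → +∞`. -/
theorem stmt9 {N : ℕ} (hN : N = 2 ∨ N = 3)
    (Ω : Set (E N)) (hΩo : IsOpen Ω) (hΩb : Bornology.IsBounded Ω) (hΩc : IsConnected Ω)
    (ω : Set (E N)) (hωm : MeasurableSet ω) (hωΩ : ω ⊆ Ω)
    (k : ℝ) (hk0 : 0 < k) (hk1 : k < 1)
    (Cp : ℝ) (hCp : 0 < Cp)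
    (hPoin : ∀ u : E N → ℝ, MemH1 Ω u →
      Cp * (H1norm Ω u) ^ 2 ≤ (∫ x in Ω, ‖gradient u x‖ ^ 2) + ∫ x in Ω \ ω, (u x) ^ 2) :
    ∃ C > (0 : ℝ),
      (∀ u : E N → ℝ, MemH1 Ω u → MemLp u 4 (volume.restrict Ω) →
        k * C * (H1norm Ω u) ^ 2 - k ^ 2 * (volume Ω).toReal / 4 ≤ Tpair Ω ω k u u) ∧
      (∀ M : ℝ, ∃ R : ℝ, ∀ u : E N → ℝ, MemH1 Ω u → MemLp u 4 (volume.restrict Ω) →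
        R ≤ H1norm Ω u → M * H1norm Ω u ≤ Tpair Ω ω k u u) := by
  classical
  have hΩm : MeasurableSet Ω := hΩo.measurableSet
  have hvol : volume Ω < ⊤ := hΩb.measure_lt_top
  set D : ℝ := k ^ 2 * (volume Ω).toReal / 4 with hD
  have hD0 : 0 ≤ D := by
    have := ENNReal.toReal_nonneg (a := volume Ω)
    positivity
  have key : ∀ u : E N → ℝ, MemH1 Ω u → MemLp u 4 (volume.restrict Ω) →
      k * Cp * (H1norm Ω u) ^ 2 - D ≤ Tpair Ω ω k u u := by
    intro u hu hu4
    set G : ℝ := ∫ x in Ω, ‖gradient u x‖ ^ 2 with hGdef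
    have hrr : (volume.restrict Ω).restrict (Ω \ ω) = volume.restrict (Ω \ ω) := by
      rw [Measure.restrict_restrict (hΩm.diff hωm), Set.inter_eq_left.mpr Set.diff_subset]
    have hu2' : MemLp u 2 (volume.restrict (Ω \ ω)) := by
      have := hu.1.restrict (Ω \ ω); rwa [hrr] at this
    have hu4' : MemLp u 4 (volume.restrict (Ω \ ω)) := by
      have := hu4.restrict (Ω \ ω); rwa [hrr] at this
    haveI : IsFiniteMeasure (volume.restrict (Ω \ ω)) := ⟨by
      rw [Measure.restrict_apply_univ]
      exact lt_of_le_of_lt (measure_mono Set.diff_subset) hvol⟩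
    set U2 : ℝ := ∫ x in Ω \ ω, (u x) ^ 2 with hU2def
    -- integrability facts
    have hG : Integrable (fun x => ‖gradient u x‖ ^ 2) (volume.restrict Ω) :=
      (hu.2.norm).integrable_sq
    have hU2 : Integrable (fun x => (u x) ^ 2) (volume.restrict (Ω \ ω)) :=
      hu2'.integrable_sq
    have hU4 : Integrable (fun x => (u x) ^ 4) (volume.restrict (Ω \ ω)) := by
      have h := hu4'.integrable_norm_rpow (by norm_num) (by norm_num)
      refine h.congr (Filter.Eventually.of_forall fun x => ?_)
      show ‖u x‖ ^ ((4 : ENNReal).toReal) = u x ^ 4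
      rw [show ((4 : ENNReal).toReal) = ((4 : ℕ) : ℝ) by norm_num, Real.rpow_natCast,
        Real.norm_eq_abs, ← abs_pow]
      exact abs_of_nonneg (by positivity)
    have hkG : Integrable (fun x => (if x ∈ ω then k else 1) * ‖gradient u x‖ ^ 2)
        (volume.restrict Ω) := by
      refine hG.bdd_mul (c := 1) ?_ (Filter.Eventually.of_forall fun x => ?_)
      · exact ((Measurable.ite hωm measurable_const measurable_const).aestronglyMeasurable)
      · by_cases hx : x ∈ ω <;> simp [hx, abs_of_nonneg hk0.le, hk1.le, abs_of_nonneg, le_refl]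
    -- first integral bound
    have hA : k * G ≤ ∫ x in Ω, (if x ∈ ω then k else 1) * ⟪gradient u x, gradient u x⟫_ℝ := by
      have heq : (fun x => (if x ∈ ω then k else 1) * ⟪gradient u x, gradient u x⟫_ℝ)
          = fun x => (if x ∈ ω then k else 1) * ‖gradient u x‖ ^ 2 := by
        funext x; rw [real_inner_self_eq_norm_sq]
      rw [heq, hGdef, ← integral_const_mul]
      refine integral_mono (hG.const_mul k) hkG fun x => ?_
      have h0 : (0:ℝ) ≤ ‖gradient u x‖ ^ 2 := sq_nonneg _
      by_cases hx : x ∈ ω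
      · simp [hx]
      · simp only [hx, if_false, one_mul]
        nlinarith
    -- second integral bound
    have hB : k * U2 - D ≤ ∫ x in Ω \ ω, (u x) ^ 3 * u x := by
      have heq : (fun x => (u x) ^ 3 * u x) = fun x => (u x) ^ 4 := by
        funext x; ring
      rw [heq]
      have hmono : ∫ x in Ω \ ω, (k * (u x) ^ 2 - k ^ 2 / 4) ≤ ∫ x in Ω \ ω, (u x) ^ 4 := by
        refine integral_mono ((hU2.const_mul k).sub (integrable_const _)) hU4 fun x => ?_
        nlinarith [sq_nonneg ((u x) ^ 2 - k / 2)]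
      have hcalc : ∫ x in Ω \ ω, (k * (u x) ^ 2 - k ^ 2 / 4)
          = k * U2 - k ^ 2 / 4 * (volume (Ω \ ω)).toReal := by
        rw [integral_sub (hU2.const_mul k) (integrable_const _), integral_const_mul,
          setIntegral_const]
        simp [hU2def, mul_comm, Measure.real]
      have hvle : (volume (Ω \ ω)).toReal ≤ (volume Ω).toReal :=
        ENNReal.toReal_mono hvol.ne (measure_mono Set.diff_subset)
      have : k ^ 2 / 4 * (volume (Ω \ ω)).toReal ≤ D := by
        rw [hD]
        have hk2 : (0:ℝ) ≤ k ^ 2 / 4 := by positivity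
        nlinarith
      linarith [hmono, hcalc ▸ hmono]
    -- H1 norm squared
    have hH1 : (H1norm Ω u) ^ 2 = (∫ x in Ω, (u x) ^ 2) + G := by
      rw [H1norm, Real.sq_sqrt]
      have h1 : 0 ≤ ∫ x in Ω, (u x) ^ 2 := integral_nonneg fun x => sq_nonneg _
      have h2 : 0 ≤ G := integral_nonneg fun x => sq_nonneg _
      linarith
    have hP := hPoin u hu
    rw [hH1] at hP ⊢
    have hk' : k * (Cp * ((∫ x in Ω, (u x) ^ 2) + G)) ≤ k * (G + U2) :=
      mul_le_mul_of_nonneg_left hP hk0.le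
    rw [Tpair]
    nlinarith [hA, hB]
  refine ⟨Cp, hCp, key, fun M => ?_⟩
  refine ⟨max 1 ((M + D) / (k * Cp)), fun u hu hu4 hR => ?_⟩
  have ht1 : (1:ℝ) ≤ H1norm Ω u := le_trans (le_max_left _ _) hR
  have hkCp : 0 < k * Cp := mul_pos hk0 hCp
  have hMD : M + D ≤ k * Cp * H1norm Ω u := by
    have h2 : (M + D) / (k * Cp) ≤ H1norm Ω u := le_trans (le_max_right _ _) hR
    calc M + D = (M + D) / (k * Cp) * (k * Cp) := by field_simp
    _ ≤ H1norm Ω u * (k * Cp) := mul_le_mul_of_nonneg_right h2 hkCp.le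
    _ = k * Cp * H1norm Ω u := by ring
  have hkey := key u hu hu4
  have : M * H1norm Ω u ≤ k * Cp * (H1norm Ω u) ^ 2 - D := by nlinarith
  linarith
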